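/- The group defined by the presentation ⟨r, s | r^5 = s^2 = 1, r^3 s = s r, s r s = r^2⟩ is isomorphic to the cyclic group of order 2. -/

import Mathlib

/-- The relations `r^5 = s^2 = 1`, `r^3 s = s r`, `s r s = r^2`, with `r` and `s`
the generators indexed by `0` and `1`. -/
def petersenRels : Set (FreeGroup (Fin 2)) :=
  { (FreeGroup.of 0) ^ 5,
    (FreeGroup.of 1) ^ 2,
    ((FreeGroup.of 0) ^ 3 * FreeGroup.of 1) * (FreeGroup.of 1 * FreeGroup.of 0)⁻¹,
    (FreeGroup.of 1 * FreeGroup.of 0 * FreeGroup.of 1) * ((FreeGroup.of 0) ^ 2)⁻¹ }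

namespace PetersenAux

abbrev G := PresentedGroup petersenRels

noncomputable abbrev r : G := PresentedGroup.of 0
noncomputable abbrev s : G := PresentedGroup.of 1

lemma rel_one (w : FreeGroup (Fin 2)) (hw : w ∈ petersenRels) :
    (PresentedGroup.mk petersenRels w : G) = 1 := by
  have : w ∈ Subgroup.normalClosure petersenRels := Subgroup.subset_normalClosure hw
  exact (QuotientGroup.eq_one_iff _).mpr this

lemma hr5 : r ^ 5 = 1 := by
  have := rel_one _ (show (FreeGroup.of 0 : FreeGroup (Fin 2)) ^ 5 ∈ petersenRels by
    simp [petersenRels])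
  simpa [PresentedGroup.of] using this

lemma hs2 : s ^ 2 = 1 := by
  have := rel_one _ (show (FreeGroup.of 1 : FreeGroup (Fin 2)) ^ 2 ∈ petersenRels by
    simp [petersenRels])
  simpa [PresentedGroup.of] using this

lemma hrel3 : r ^ 3 * s = s * r := by
  have := rel_one _ (show ((FreeGroup.of 0 : FreeGroup (Fin 2)) ^ 3 * FreeGroup.of 1) *
      (FreeGroup.of 1 * FreeGroup.of 0)⁻¹ ∈ petersenRels by simp [petersenRels])
  have h : (r ^ 3 * s) * (s * r)⁻¹ = 1 := by
    simpa [PresentedGroup.of] using this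
  exact mul_inv_eq_one.mp h

lemma hrel4 : s * r * s = r ^ 2 := by
  have := rel_one _ (show (FreeGroup.of 1 * FreeGroup.of 0 * FreeGroup.of 1 : FreeGroup (Fin 2)) *
      ((FreeGroup.of 0) ^ 2)⁻¹ ∈ petersenRels by simp [petersenRels])
  have h : (s * r * s) * (r ^ 2)⁻¹ = 1 := by
    simpa [PresentedGroup.of] using this
  exact mul_inv_eq_one.mp h

lemma hr : r = 1 := by
  have h1 : r ^ 3 * s * s = s * r * s := by rw [hrel3]
  have h2 : r ^ 3 * (s * s) = r ^ 2 := by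
    rw [← mul_assoc, h1, hrel4]
  have h3 : s * s = 1 := by have := hs2; rwa [pow_two] at this
  rw [h3, mul_one] at h2
  -- r^3 = r^2 implies r = 1
  have : r ^ 3 * (r ^ 2)⁻¹ = 1 := by rw [h2, mul_inv_cancel]
  calc r = r ^ 3 * (r ^ 2)⁻¹ := by group
    _ = 1 := this

/-- the map on generators -/
noncomputable def F : Fin 2 → Multiplicative (ZMod 2) :=
  fun i => if i = 0 then 1 else Multiplicative.ofAdd 1

lemma F_rels : ∀ w ∈ petersenRels, FreeGroup.lift F w = 1 := by
  intro w hw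
  have h0 : F 0 = 1 := rfl
  have h1 : F 1 = Multiplicative.ofAdd 1 := rfl
  rcases hw with h | h | h | h <;> subst h <;>
    simp [h0, h1, ← ofAdd_add] <;> decide

noncomputable def f : G →* Multiplicative (ZMod 2) :=
  PresentedGroup.toGroup F_rels

noncomputable def g : Multiplicative (ZMod 2) →* G where
  toFun x := s ^ (x.toAdd.val)
  map_one' := by
    show s ^ ((0 : ZMod 2)).val = 1
    simp
  map_mul' x y := by
    show s ^ ((x.toAdd + y.toAdd : ZMod 2)).val = s ^ (x.toAdd.val) * s ^ (y.toAdd.val)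
    rw [ZMod.val_add, ← pow_eq_pow_mod _ hs2, pow_add]

lemma f_s : f s = Multiplicative.ofAdd 1 := PresentedGroup.toGroup.of F_rels

lemma f_r : f r = 1 := PresentedGroup.toGroup.of F_rels

lemma g_f : g.comp f = MonoidHom.id G := by
  apply PresentedGroup.ext
  intro x
  fin_cases x
  · show g (f r) = r
    rw [f_r, hr, map_one]
  · show g (f s) = s
    rw [f_s]
    show s ^ ((1 : ZMod 2)).val = s
    rw [show ZMod.val (1 : ZMod 2) = 1 from rfl, pow_one]

lemma f_g : f.comp g = MonoidHom.id (Multiplicative (ZMod 2)) := by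
  refine MonoidHom.ext fun x => ?_
  show f (s ^ (x.toAdd.val)) = x
  rw [map_pow, f_s]
  show (Multiplicative.ofAdd (1 : ZMod 2)) ^ (x.toAdd.val) = x
  rw [← ofAdd_nsmul]
  simp [nsmul_eq_mul, ZMod.natCast_val]

end PetersenAux

/-- The group presented by `⟨r, s ∣ r^5 = s^2 = 1, r^3 s = s r, s r s = r^2⟩`
is isomorphic to the cyclic group of order 2. -/
theorem petersen_presented_group_iso_C2 :
    Nonempty (PresentedGroup petersenRels ≃* Multiplicative (ZMod 2)) := by
  exact ⟨{ toFun := PetersenAux.f,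
           invFun := PetersenAux.g,
           left_inv := fun x => congrFun (congrArg DFunLike.coe PetersenAux.g_f) x,
           right_inv := fun x => congrFun (congrArg DFunLike.coe PetersenAux.f_g) x,
           map_mul' := map_mul _ }⟩
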